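/- Let G be a finitely generated nilpotent group and A ⊆ G a finite set such that for every a ∈ A, a⁻¹ lies in A*·H', where H = ⟨A⟩, A* is the submonoid generated by A, and H' = [H,H]. Then A* = ⟨A⟩, i.e., the submonoid generated by A is a group. -/

import Mathlib

open scoped Pointwise
open scoped commutatorElement

namespace Stmt18Aux

variable {G : Type*} [Group G]

def lowerCentralSeries (G : Type*) [Group G] (n : ℕ) : Subgroup G :=
  Subgroup.lowerCentralSeries (⊤ : Subgroup G) n

lemma lowerCentralSeries_zero {G : Type*} [Group G] : lowerCentralSeries G 0 = ⊤ := rfl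

lemma lowerCentralSeries_succ {G : Type*} [Group G] (n : ℕ) :
    lowerCentralSeries G (n + 1) = Subgroup.closure
      {x | ∃ p ∈ lowerCentralSeries G n, ∃ q ∈ (⊤ : Subgroup G), p * q * p⁻¹ * q⁻¹ = x} := rfl

instance lowerCentralSeries_normal {G : Type*} [Group G] (n : ℕ) :
    (lowerCentralSeries G n).Normal := by
  unfold lowerCentralSeries; infer_instance




/-- If `⁅x,y⁆` is central then `⁅x^n, y⁆ = ⁅x,y⁆^n`. -/
lemma comm_pow_left (x y : G) (h : ∀ g : G, Commute ⁅x, y⁆ g) (n : ℕ) :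
    ⁅x ^ n, y⁆ = ⁅x, y⁆ ^ n := by
  induction n with
  | zero => simp
  | succ n ih =>
    have hxn : x ^ n * y = ⁅x, y⁆ ^ n * y * x ^ n := by
      have := ih
      rw [commutatorElement_def] at this
      have : x ^ n * y * (x ^ n)⁻¹ * y⁻¹ * y = ⁅x, y⁆ ^ n * y := by rw [this]
      group at this
      calc x ^ n * y = (x ^ n * y * (x ^ n)⁻¹) * x ^ n := by group
        _ = (⁅x, y⁆ ^ n * y) * x ^ n := by
            rw [show x ^ n * y * (x ^ n)⁻¹ = ⁅x, y⁆ ^ n * y by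
              have := ih; rw [commutatorElement_def] at this
              calc x ^ n * y * (x ^ n)⁻¹ = (x ^ n * y * (x ^ n)⁻¹ * y⁻¹) * y := by group
                _ = ⁅x, y⁆ ^ n * y := by rw [this]]
    calc ⁅x ^ (n+1), y⁆ = x * (x ^ n * y) * (x ^ (n+1))⁻¹ * y⁻¹ := by
          rw [commutatorElement_def]; group
      _ = x * (⁅x, y⁆ ^ n * y * x ^ n) * (x ^ (n+1))⁻¹ * y⁻¹ := by rw [hxn]
      _ = ⁅x, y⁆ ^ n * (x * y * x⁻¹ * y⁻¹) := by
          have hc' : x * ⁅x, y⁆ ^ n = ⁅x, y⁆ ^ n * x := ((h x).pow_left n).symm.eq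
          calc x * (⁅x, y⁆ ^ n * y * x ^ n) * (x ^ (n+1))⁻¹ * y⁻¹
              = (x * ⁅x, y⁆ ^ n) * (y * x ^ n * (x ^ (n+1))⁻¹ * y⁻¹) := by group
            _ = (⁅x, y⁆ ^ n * x) * (y * x ^ n * (x ^ (n+1))⁻¹ * y⁻¹) := by rw [hc']
            _ = ⁅x, y⁆ ^ n * (x * y * x⁻¹ * y⁻¹) := by group
      _ = ⁅x, y⁆ ^ (n + 1) := by rw [← commutatorElement_def]; rw [pow_succ]

lemma comm_pow_right (x y : G) (h : ∀ g : G, Commute ⁅x, y⁆ g) (n : ℕ) :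
    ⁅x, y ^ n⁆ = ⁅x, y⁆ ^ n := by
  have h' : ∀ g : G, Commute ⁅y, x⁆ g := by
    intro g
    rw [← commutatorElement_inv]
    exact (h g).inv_left
  have := comm_pow_left y x h' n
  calc ⁅x, y ^ n⁆ = ⁅y ^ n, x⁆⁻¹ := by rw [commutatorElement_inv]
    _ = (⁅y, x⁆ ^ n)⁻¹ := by rw [this]
    _ = (⁅y, x⁆⁻¹) ^ n := by rw [inv_pow]
    _ = ⁅x, y⁆ ^ n := by rw [commutatorElement_inv]

lemma comm_pow_pow (x y : G) (h : ∀ g : G, Commute ⁅x, y⁆ g) (n : ℕ) :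
    ⁅x ^ n, y ^ n⁆ = ⁅x, y⁆ ^ (n * n) := by
  have h1 := comm_pow_left x y h n
  have h2 : ∀ g : G, Commute ⁅x ^ n, y⁆ g := by
    intro g; rw [h1]; exact (h g).pow_left n
  rw [comm_pow_right (x ^ n) y h2 n, h1, ← pow_mul]





lemma sym_word_of_closure_top {A : Set G} (hA : Subgroup.closure A = ⊤) (g : G) :
    ∃ l : List G, (∀ x ∈ l, x ∈ A ∨ x⁻¹ ∈ A) ∧ l.prod = g := by
  have hg : g ∈ Submonoid.closure (A ∪ A⁻¹) := by
    rw [← Subgroup.closure_toSubmonoid]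
    show g ∈ Subgroup.closure A
    rw [hA]; trivial
  obtain ⟨l, hl, hp⟩ := Submonoid.exists_list_of_mem_closure hg
  refine ⟨l, fun x hx => ?_, hp⟩
  rcases hl x hx with h | h
  · exact Or.inl h
  · exact Or.inr (Set.mem_inv.mp h)

lemma sym_inv {A : Set G} (l : List G) (h : ∀ x ∈ l, x ∈ A ∨ x⁻¹ ∈ A) :
    ∃ l' : List G, (∀ x ∈ l', x ∈ A ∨ x⁻¹ ∈ A) ∧ l'.length = l.length ∧
      l'.prod = l.prod⁻¹ := by
  refine ⟨(l.map fun x => x⁻¹).reverse, ?_, by simp, (List.prod_inv_reverse l).symm⟩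
  intro x hx
  rw [List.mem_reverse, List.mem_map] at hx
  obtain ⟨y, hy, rfl⟩ := hx
  rcases h y hy with h' | h'
  · exact Or.inr (by simpa using h')
  · exact Or.inl h'

lemma pow_word (l : List G) (n : ℕ) :
    ∃ l' : List G, (∀ x ∈ l', x ∈ l) ∧ l'.length = n * l.length ∧
      l'.prod = l.prod ^ n := by
  refine ⟨(List.replicate n l).flatten, ?_, ?_, ?_⟩
  · intro x hx
    rw [List.mem_flatten] at hx
    obtain ⟨c, hc, hxc⟩ := hx
    rw [List.mem_replicate] at hc
    exact hc.2 ▸ hxc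
  · rw [List.length_flatten, List.map_replicate, List.sum_replicate, smul_eq_mul]
  · rw [List.prod_flatten, List.map_replicate, List.prod_replicate]

lemma shift_word {A : Finset G} {W : List G} (hW : ∀ x ∈ W, x ∈ A) {a : G} (ha : a ∈ W)
    (hcen : ∀ g : G, Commute W.prod g) :
    ∃ s : List G, (∀ x ∈ s, x ∈ A) ∧ s.prod = a⁻¹ * W.prod := by
  obtain ⟨u, v, hfac⟩ := List.append_of_mem ha
  refine ⟨v ++ u, ?_, ?_⟩
  · intro x hx
    rcases List.mem_append.mp hx with h | h
    · exact hW x (by rw [hfac]; simp [h])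
    · exact hW x (by rw [hfac]; simp [h])
  · have hζ : W.prod = u.prod * a * v.prod := by
      rw [hfac, List.prod_append, List.prod_cons, mul_assoc]
    have h2 : W.prod * u.prod = u.prod * W.prod := (hcen u.prod).eq
    have h3 : a * v.prod * u.prod = W.prod := by
      apply mul_left_cancel (a := u.prod)
      calc u.prod * (a * v.prod * u.prod) = (u.prod * a * v.prod) * u.prod := by group
        _ = W.prod * u.prod := by rw [← hζ]
        _ = u.prod * W.prod := h2
    rw [List.prod_append, ← h3]
    group

lemma convert_word {A : Finset G} {ζ : G} (hcen : ∀ g : G, Commute ζ g)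
    (hs : ∀ a ∈ A, ∃ s : List G, (∀ x ∈ s, x ∈ A) ∧ s.prod = a⁻¹ * ζ) :
    ∀ l : List G, (∀ x ∈ l, x ∈ (A : Set G) ∨ x⁻¹ ∈ (A : Set G)) →
      ∃ (p : List G) (k : ℕ), (∀ x ∈ p, x ∈ A) ∧ k ≤ l.length ∧
        p.prod = l.prod * ζ ^ k := by
  intro l
  induction l with
  | nil => exact fun _ => ⟨[], 0, by simp, by simp, by simp⟩
  | cons x l ih =>
    intro hl
    obtain ⟨p, k, hp, hk, hprod⟩ := ih (fun y hy => hl y (List.mem_cons_of_mem x hy))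
    rcases hl x (List.mem_cons_self) with hx | hx
    · exact ⟨x :: p, k, by
        intro y hy
        rcases List.mem_cons.mp hy with rfl | hy
        · exact hx
        · exact hp y hy, hk.trans (by simp), by
        rw [List.prod_cons, List.prod_cons, hprod, mul_assoc]⟩
    · obtain ⟨s, hsA, hsprod⟩ := hs x⁻¹ hx
      refine ⟨s ++ p, k + 1, ?_, by simp only [List.length_cons]; exact Nat.succ_le_succ hk, ?_⟩
      · intro y hy
        rcases List.mem_append.mp hy with h | h
        · exact hsA y h
        · exact hp y h
      · rw [List.prod_append, hsprod, hprod, inv_inv, List.prod_cons]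
        have hc : ∀ m : ℕ, ζ * (l.prod * ζ ^ m) = l.prod * ζ ^ (m + 1) := by
          intro m
          rw [← mul_assoc, (hcen l.prod).eq, mul_assoc, ← pow_succ']
        calc x * ζ * (l.prod * ζ ^ k) = x * (ζ * (l.prod * ζ ^ k)) := by group
          _ = x * (l.prod * ζ ^ (k + 1)) := by rw [hc k]
          _ = x * l.prod * ζ ^ (k + 1) := by group

lemma lcs_quotient_le (N : Subgroup G) [N.Normal] (n : ℕ) :
    lowerCentralSeries (G ⧸ N) n ≤
      Subgroup.map (QuotientGroup.mk' N) (lowerCentralSeries G n) := by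
  induction n with
  | zero =>
    simp only [lowerCentralSeries_zero]
    rw [Subgroup.map_top_of_surjective _ (QuotientGroup.mk'_surjective N)]
  | succ n ih =>
    have h1 : lowerCentralSeries (G ⧸ N) (n + 1) =
        ⁅lowerCentralSeries (G ⧸ N) n, (⊤ : Subgroup (G ⧸ N))⁆ := by
      rw [lowerCentralSeries_succ, Subgroup.commutator_def]
      rfl
    have h2 : lowerCentralSeries G (n + 1) =
        ⁅lowerCentralSeries G n, (⊤ : Subgroup G)⁆ := by
      rw [lowerCentralSeries_succ, Subgroup.commutator_def]
      rfl
    rw [h1, h2, Subgroup.map_commutator]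
    refine Subgroup.commutator_mono ih ?_
    rw [Subgroup.map_top_of_surjective _ (QuotientGroup.mk'_surjective N)]






lemma sublinear_powers {A : Set G} (hA : Subgroup.closure A = ⊤) {S : Subgroup G}
    (hcen : ∀ z ∈ ⁅S, (⊤ : Subgroup G)⁆, ∀ g : G, Commute z g) :
    ∀ ζ ∈ ⁅S, (⊤ : Subgroup G)⁆, ∃ C : ℕ, ∀ n : ℕ,
      ∃ l : List G, (∀ x ∈ l, x ∈ A ∨ x⁻¹ ∈ A) ∧ l.length ≤ C * n ∧
        l.prod = ζ ^ (n * n) := by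
  have hKdef : ⁅S, (⊤ : Subgroup G)⁆ =
      Subgroup.closure {g | ∃ g₁ ∈ S, ∃ g₂ ∈ (⊤ : Subgroup G), ⁅g₁, g₂⁆ = g} :=
    Subgroup.commutator_def S ⊤
  intro ζ hζ
  rw [hKdef] at hζ
  induction hζ using Subgroup.closure_induction with
  | mem z hz =>
    obtain ⟨x, hxS, y, -, rfl⟩ := hz
    have hc : ∀ g : G, Commute ⁅x, y⁆ g :=
      hcen _ (Subgroup.commutator_mem_commutator hxS (Subgroup.mem_top y))
    obtain ⟨lx, hlx, hlxp⟩ := sym_word_of_closure_top hA x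
    obtain ⟨ly, hly, hlyp⟩ := sym_word_of_closure_top hA y
    refine ⟨2 * (lx.length + ly.length), fun n => ?_⟩
    obtain ⟨px, hpx, hpxlen, hpxp⟩ := pow_word lx n
    obtain ⟨py, hpy, hpylen, hpyp⟩ := pow_word ly n
    obtain ⟨qx, hqx, hqxlen, hqxp⟩ := sym_inv (A := A) px (fun t ht => hlx t (hpx t ht))
    obtain ⟨qy, hqy, hqylen, hqyp⟩ := sym_inv (A := A) py (fun t ht => hly t (hpy t ht))
    refine ⟨px ++ py ++ qx ++ qy, ?_, ?_, ?_⟩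
    · intro t ht
      simp only [List.mem_append] at ht
      rcases ht with ((h | h) | h) | h
      · exact hlx t (hpx t h)
      · exact hly t (hpy t h)
      · exact hqx t h
      · exact hqy t h
    · simp only [List.length_append, hpxlen, hpylen, hqxlen, hqylen]
      have : n * lx.length + n * ly.length + n * lx.length + n * ly.length =
          2 * (lx.length + ly.length) * n := by ring
      omega
    · simp only [List.prod_append, hqxp, hqyp, hpxp, hpyp, hlxp, hlyp]
      rw [← comm_pow_pow x y hc n]
      rw [commutatorElement_def]
  | one => exact ⟨0, fun n => ⟨[], by simp, by simp, by simp⟩⟩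
  | mul z w hz hw ihz ihw =>
    obtain ⟨C₁, h₁⟩ := ihz
    obtain ⟨C₂, h₂⟩ := ihw
    refine ⟨C₁ + C₂, fun n => ?_⟩
    obtain ⟨l₁, hl₁, hlen₁, hp₁⟩ := h₁ n
    obtain ⟨l₂, hl₂, hlen₂, hp₂⟩ := h₂ n
    have hzw : Commute z w := hcen z (hKdef ▸ hz) w
    refine ⟨l₁ ++ l₂, ?_, ?_, ?_⟩
    · intro t ht
      rcases List.mem_append.mp ht with h | h
      · exact hl₁ t h
      · exact hl₂ t h
    · simp only [List.length_append]
      have : (C₁ + C₂) * n = C₁ * n + C₂ * n := by ring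
      omega
    · rw [List.prod_append, hp₁, hp₂, hzw.mul_pow]
  | inv z hz ihz =>
    obtain ⟨C, h⟩ := ihz
    refine ⟨C, fun n => ?_⟩
    obtain ⟨l, hl, hlen, hp⟩ := h n
    obtain ⟨l', hl', hlen', hp'⟩ := sym_inv (A := A) l hl
    exact ⟨l', hl', hlen' ▸ hlen, by rw [hp', hp, ← inv_pow]⟩

lemma lift_word {H : Type*} [Group H] (π : G →* H) (A : Finset G) {a : G} (ha : a ∈ A)
    (lbar : List H) (hl : ∀ x ∈ lbar, ∃ b ∈ A, π b = x) (hal : π a ∈ lbar) :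
    ∃ l : List G, (∀ x ∈ l, x ∈ A) ∧ a ∈ l ∧ l.map π = lbar := by
  classical
  set f : H → G := fun x =>
    if x = π a then a else if h : ∃ b, b ∈ A ∧ π b = x then h.choose else 1 with hf
  have hkey : ∀ x ∈ lbar, f x ∈ A ∧ π (f x) = x := by
    intro x hx
    by_cases hxa : x = π a
    · subst hxa
      have hfa : f (π a) = a := by simp [hf]
      rw [hfa]
      exact ⟨ha, rfl⟩
    · have hex : ∃ b, b ∈ A ∧ π b = x := by
        obtain ⟨b, hb, hbx⟩ := hl x hx
        exact ⟨b, hb, hbx⟩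
      simp only [hf, if_neg hxa, dif_pos hex]
      exact ⟨hex.choose_spec.1, hex.choose_spec.2⟩
  refine ⟨lbar.map f, ?_, ?_, ?_⟩
  · intro x hx
    obtain ⟨y, hy, rfl⟩ := List.mem_map.mp hx
    exact (hkey y hy).1
  · refine List.mem_map.mpr ⟨π a, hal, ?_⟩
    simp [hf]
  · rw [List.map_map]
    have : ∀ x ∈ lbar, (π ∘ f) x = id x := fun x hx => (hkey x hx).2
    rw [List.map_congr_left this, List.map_id]



universe u

lemma lcs_succ_comm (G : Type*) [Group G] (n : ℕ) :
    lowerCentralSeries G (n + 1) = ⁅lowerCentralSeries G n, (⊤ : Subgroup G)⁆ := by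
  rw [lowerCentralSeries_succ, Subgroup.commutator_def]
  rfl

theorem key (c : ℕ) : ∀ (G : Type u) [Group G] (A : Finset G),
    lowerCentralSeries G c = ⊥ →
    Subgroup.closure (A : Set G) = ⊤ →
    (∀ a ∈ A, a⁻¹ ∈ ((Submonoid.closure (A : Set G) : Submonoid G) : Set G) *
      ((⁅(⊤ : Subgroup G), (⊤ : Subgroup G)⁆ : Subgroup G) : Set G)) →
    ∀ a ∈ A, ∃ l : List G, (∀ x ∈ l, x ∈ A) ∧ a ∈ l ∧ l.prod = 1 := by
  induction c with
  | zero =>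
    intro G _ A hbot _ _ a ha
    refine ⟨[a], by simpa using ha, by simp, ?_⟩
    have : a ∈ (⊥ : Subgroup G) := by
      rw [← hbot]
      simp [lowerCentralSeries_zero]
    simpa using this
  | succ c ih =>
    rcases c with _ | c'
    · -- abelian case : ⁅⊤,⊤⁆ = ⊥
      intro G _ A hbot _ hinv a ha
      have hcomm : (⁅(⊤ : Subgroup G), (⊤ : Subgroup G)⁆ : Subgroup G) = ⊥ := by
        have h0 := lcs_succ_comm G 0
        rw [lowerCentralSeries_zero] at h0
        rw [← h0]
        exact hbot
      obtain ⟨m, hm, h, hh, heq'⟩ := hinv a ha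
      have heq : m * h = a⁻¹ := heq'
      rw [hcomm] at hh
      have hh1 : h = 1 := by simpa using hh
      rw [hh1, mul_one] at heq
      obtain ⟨p, hpA, hpprod⟩ := Submonoid.exists_list_of_mem_closure hm
      refine ⟨a :: p, ?_, List.mem_cons_self, ?_⟩
      · intro x hx
        rcases List.mem_cons.mp hx with rfl | hx
        · exact ha
        · exact hpA x hx
      · rw [List.prod_cons, hpprod, heq, mul_inv_cancel]
    · -- main case
      intro G _ A hbot hcl hinv a ha
      classical
      set K := lowerCentralSeries G (c' + 1) with hKdef
      have hK2 : ⁅K, (⊤ : Subgroup G)⁆ = ⊥ := by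
        rw [hKdef, ← lcs_succ_comm]
        exact hbot
      have hcenK : ∀ z ∈ K, ∀ g : G, Commute z g := by
        intro z hz g
        rw [← commutatorElement_eq_one_iff_commute]
        have : ⁅z, g⁆ ∈ ⁅K, (⊤ : Subgroup G)⁆ :=
          Subgroup.commutator_mem_commutator hz (Subgroup.mem_top g)
        rw [hK2] at this
        simpa using this
      set π := QuotientGroup.mk' K with hπ
      have hπsurj : Function.Surjective π := QuotientGroup.mk'_surjective K
      have hQbot : lowerCentralSeries (G ⧸ K) (c' + 1) = ⊥ := by
        rw [eq_bot_iff]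
        refine (lcs_quotient_le K (c' + 1)).trans ?_
        rw [← hKdef]
        have : Subgroup.map π K = ⊥ := by
          rw [Subgroup.map_eq_bot_iff, QuotientGroup.ker_mk']
        exact this.le
      set Abar : Finset (G ⧸ K) := A.image π with hAbar
      have hAbarcoe : (Abar : Set (G ⧸ K)) = π '' (A : Set G) := by
        rw [hAbar, Finset.coe_image]
      have hclQ : Subgroup.closure (Abar : Set (G ⧸ K)) = ⊤ := by
        rw [hAbarcoe, ← MonoidHom.map_closure, hcl,
          Subgroup.map_top_of_surjective _ hπsurj]
      have hinvQ : ∀ b ∈ Abar, b⁻¹ ∈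
          ((Submonoid.closure (Abar : Set (G ⧸ K)) : Submonoid (G ⧸ K)) : Set (G ⧸ K)) *
          ((⁅(⊤ : Subgroup (G ⧸ K)), (⊤ : Subgroup (G ⧸ K))⁆ : Subgroup (G ⧸ K)) :
            Set (G ⧸ K)) := by
        intro b hb
        obtain ⟨a', ha', rfl⟩ := Finset.mem_image.mp hb
        obtain ⟨m, hm, h, hh, heq'⟩ := hinv a' ha'
        have heq : m * h = a'⁻¹ := heq'
        refine ⟨π m, ?_, π h, ?_, ?_⟩
        · have : Submonoid.closure (Abar : Set (G ⧸ K)) =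
              Submonoid.map π (Submonoid.closure (A : Set G)) := by
            rw [MonoidHom.map_mclosure, hAbarcoe]
          rw [this]
          exact ⟨m, hm, rfl⟩
        · have : (⁅(⊤ : Subgroup (G ⧸ K)), (⊤ : Subgroup (G ⧸ K))⁆ : Subgroup (G ⧸ K)) =
              Subgroup.map π ⁅(⊤ : Subgroup G), (⊤ : Subgroup G)⁆ := by
            rw [Subgroup.map_commutator, Subgroup.map_top_of_surjective _ hπsurj]
          rw [SetLike.mem_coe, this]
          exact ⟨h, hh, rfl⟩
        · show π m * π h = (π a')⁻¹
          rw [← map_mul, heq, map_inv]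
      have hword : ∀ b ∈ A, ∃ l : List G, (∀ x ∈ l, x ∈ A) ∧ b ∈ l ∧ l.prod ∈ K := by
        intro b hb
        obtain ⟨lbar, hl1, hl2, hl3⟩ := ih (G ⧸ K) Abar hQbot hclQ hinvQ (π b)
          (Finset.mem_image_of_mem π hb)
        obtain ⟨l, hlA, hbl, hlmap⟩ := lift_word π A hb lbar
          (fun x hx => Finset.mem_image.mp (hl1 x hx)) hl2
        refine ⟨l, hlA, hbl, ?_⟩
        have : π l.prod = 1 := by
          rw [map_list_prod, hlmap, hl3]
        rwa [← QuotientGroup.ker_mk' K, MonoidHom.mem_ker]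
      choose wfun hw1 hw2 hw3 using hword
      set W : List G := (A.attach.toList.map (fun x => wfun x.1 x.2)).flatten with hW
      have hWA : ∀ x ∈ W, x ∈ A := by
        intro x hx
        rw [hW, List.mem_flatten] at hx
        obtain ⟨cc, hcc, hxc⟩ := hx
        obtain ⟨y, _, rfl⟩ := List.mem_map.mp hcc
        exact hw1 y.1 y.2 x hxc
      have hWall : ∀ b, (hb : b ∈ A) → b ∈ W := by
        intro b hb
        rw [hW, List.mem_flatten]
        exact ⟨wfun b hb, List.mem_map.mpr ⟨⟨b, hb⟩, by simp, rfl⟩, hw2 b hb⟩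
      have hWK : W.prod ∈ K := by
        rw [hW, List.prod_flatten]
        refine list_prod_mem ?_
        intro x hx
        rw [List.map_map] at hx
        obtain ⟨y, _, rfl⟩ := List.mem_map.mp hx
        exact hw3 y.1 y.2
      set ζ := W.prod with hζ
      have hcenζ : ∀ g : G, Commute ζ g := hcenK ζ hWK
      have hs : ∀ b ∈ A, ∃ s : List G, (∀ x ∈ s, x ∈ A) ∧ s.prod = b⁻¹ * ζ :=
        fun b hb => shift_word hWA (hWall b hb) hcenζ
      have hKeq : K = ⁅lowerCentralSeries G c', (⊤ : Subgroup G)⁆ := by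
        rw [hKdef, lcs_succ_comm]
      have hcen' : ∀ z ∈ ⁅lowerCentralSeries G c', (⊤ : Subgroup G)⁆, ∀ g : G,
          Commute z g := by
        rw [← hKeq]
        exact hcenK
      obtain ⟨C, hC⟩ := sublinear_powers hcl hcen' ζ⁻¹ (by rw [← hKeq]; exact inv_mem hWK)
      obtain ⟨l, hlsym, hllen, hlprod⟩ := hC (C + 1)
      obtain ⟨p, k, hpA, hk, hpprod⟩ := convert_word hcenζ hs l hlsym
      have hkn : k < (C + 1) * (C + 1) := by
        have h1 : k ≤ C * (C + 1) := hk.trans hllen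
        nlinarith
      obtain ⟨w2, hw2A, hw2len, hw2prod⟩ := pow_word W ((C + 1) * (C + 1) - k - 1)
      obtain ⟨sa, hsaA, hsaprod⟩ := hs a ha
      refine ⟨p ++ w2 ++ (a :: sa), ?_, ?_, ?_⟩
      · intro x hx
        simp only [List.mem_append, List.mem_cons] at hx
        rcases hx with (h | h) | h | h
        · exact hpA x h
        · exact hWA x (hw2A x h)
        · exact h ▸ ha
        · exact hsaA x h
      · simp only [List.mem_append, List.mem_cons]
        tauto
      · have hcomb : (p ++ w2 ++ (a :: sa)).prod =
            p.prod * w2.prod * (a * sa.prod) := by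
          simp [List.prod_append, List.prod_cons, mul_assoc]
        rw [hcomb, hpprod, hw2prod, hsaprod, hlprod, ← hζ]
        have h1 : a * (a⁻¹ * ζ) = ζ := by group
        rw [h1]
        have h2 : k + ((C + 1) * (C + 1) - k - 1) + 1 = (C + 1) * (C + 1) := by omega
        calc ζ⁻¹ ^ ((C+1)*(C+1)) * ζ ^ k * ζ ^ ((C+1)*(C+1) - k - 1) * ζ
            = ζ⁻¹ ^ ((C+1)*(C+1)) * ζ ^ (k + ((C+1)*(C+1) - k - 1) + 1) := by
              rw [mul_assoc, mul_assoc, ← pow_succ, ← pow_add]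
              congr 1
          _ = 1 := by rw [h2, inv_pow, inv_mul_cancel]

end Stmt18Aux
theorem stmt_18 {G : Type*} [Group G] [Group.FG G] [Group.IsNilpotent G]
    (A : Finset G)
    (hinv : ∀ a ∈ A, a⁻¹ ∈
      ((Submonoid.closure (A : Set G) : Submonoid G) : Set G) *
        ((⁅Subgroup.closure (A : Set G), Subgroup.closure (A : Set G)⁆ : Subgroup G) :
          Set G)) :
    ((Submonoid.closure (A : Set G) : Submonoid G) : Set G) =
      ((Subgroup.closure (A : Set G) : Subgroup G) : Set G) := by
  classical
  set H : Subgroup G := Subgroup.closure (A : Set G) with hH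
  have e_inj : Function.Injective
      (fun x : {x // x ∈ A} => (⟨x.1, Subgroup.subset_closure x.2⟩ : H)) := by
    intro x y hxy
    have hval : (↑x : G) = ↑y := congrArg (Subtype.val : H → G) hxy
    exact Subtype.ext hval
  set Ahat : Finset H := A.attach.map ⟨_, e_inj⟩ with hAhat
  have hmem : ∀ y : H, y ∈ Ahat ↔ (y : G) ∈ A := by
    intro y
    constructor
    · intro hy
      obtain ⟨x, _, rfl⟩ := Finset.mem_map.mp hy
      exact x.2
    · intro hy
      exact Finset.mem_map.mpr ⟨⟨(y : G), hy⟩, Finset.mem_attach _ _, Subtype.ext rfl⟩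
  have himg : H.subtype '' (Ahat : Set H) = (A : Set G) := by
    ext g
    constructor
    · rintro ⟨y, hy, rfl⟩
      exact (hmem y).mp hy
    · intro hg
      exact ⟨⟨g, Subgroup.subset_closure hg⟩, (hmem _).mpr hg, rfl⟩
  have hcl : Subgroup.closure (Ahat : Set H) = ⊤ := by
    apply Subgroup.map_injective H.subtype_injective
    rw [MonoidHom.map_closure, himg, ← MonoidHom.range_eq_map, Subgroup.range_subtype]
  have hSubM : Submonoid.map H.subtype (Submonoid.closure (Ahat : Set H)) =
      Submonoid.closure (A : Set G) := by
    rw [MonoidHom.map_mclosure, himg]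
  have hComm : Subgroup.map H.subtype ⁅(⊤ : Subgroup H), (⊤ : Subgroup H)⁆ = ⁅H, H⁆ := by
    rw [Subgroup.map_commutator, ← MonoidHom.range_eq_map, Subgroup.range_subtype]
  have hinvH : ∀ b ∈ Ahat, b⁻¹ ∈
      ((Submonoid.closure (Ahat : Set H) : Submonoid H) : Set H) *
        ((⁅(⊤ : Subgroup H), (⊤ : Subgroup H)⁆ : Subgroup H) : Set H) := by
    intro b hb
    obtain ⟨m, hm, h, hh, heq'⟩ := hinv (b : G) ((hmem b).mp hb)
    have heq : m * h = (b : G)⁻¹ := heq'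
    have hm' : m ∈ Submonoid.map H.subtype (Submonoid.closure (Ahat : Set H)) := by
      rw [hSubM]; exact hm
    obtain ⟨mh, hmh, hmeq⟩ := hm'
    have hh' : h ∈ Subgroup.map H.subtype ⁅(⊤ : Subgroup H), (⊤ : Subgroup H)⁆ := by
      rw [hComm]; exact hh
    obtain ⟨hhH, hhmem, hheq⟩ := hh'
    refine ⟨mh, hmh, hhH, hhmem, ?_⟩
    show mh * hhH = b⁻¹
    apply Subtype.ext
    show H.subtype mh * H.subtype hhH = (b : G)⁻¹
    rw [hmeq, hheq]
    exact heq
  obtain ⟨c, hc⟩ := nilpotent_iff_lowerCentralSeries.mp (inferInstance : Group.IsNilpotent H)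
  have hmain : ∀ a ∈ A, a⁻¹ ∈ Submonoid.closure (A : Set G) := by
    intro a ha
    set b : H := ⟨a, Subgroup.subset_closure ha⟩ with hb
    obtain ⟨lw, hlA, hbl, hlprod⟩ := Stmt18Aux.key c H Ahat hc hcl hinvH b ((hmem b).mpr ha)
    obtain ⟨u, v, hfac⟩ := List.append_of_mem hbl
    have h1 : u.prod * (b * v.prod) = 1 := by
      rw [← List.prod_cons, ← List.prod_append, ← hfac, hlprod]
    have hbinv : b⁻¹ = v.prod * u.prod := by
      have h4 : b * (v.prod * u.prod) = 1 := by
        calc b * (v.prod * u.prod)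
            = u.prod⁻¹ * (u.prod * (b * v.prod)) * u.prod := by group
          _ = 1 := by rw [h1]; group
      exact inv_eq_of_mul_eq_one_right h4
    have hvu : v.prod * u.prod ∈ Submonoid.closure (Ahat : Set H) := by
      refine Submonoid.mul_mem _ (list_prod_mem ?_) (list_prod_mem ?_)
      · intro x hx
        refine Submonoid.subset_closure (Finset.mem_coe.mpr ?_)
        exact hlA x (by rw [hfac]; simp [hx])
      · intro x hx
        refine Submonoid.subset_closure (Finset.mem_coe.mpr ?_)
        exact hlA x (by rw [hfac]; simp [hx])
    have hbmem : b⁻¹ ∈ Submonoid.closure (Ahat : Set H) := hbinv ▸ hvu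
    have hfin : ((b⁻¹ : H) : G) ∈ Submonoid.closure (A : Set G) := by
      rw [← hSubM]
      exact ⟨b⁻¹, hbmem, rfl⟩
    simpa using hfin
  ext g
  simp only [SetLike.mem_coe]
  constructor
  · intro hg
    exact Subgroup.le_closure_toSubmonoid _ hg
  · intro hg
    have hInvClosed : ∀ x ∈ Submonoid.closure (A : Set G),
        x⁻¹ ∈ Submonoid.closure (A : Set G) := by
      intro x hx
      induction hx using Submonoid.closure_induction with
      | mem y hy => exact hmain y hy
      | one => simpa using Submonoid.one_mem (Submonoid.closure (A : Set G))
      | mul y z hy hz ihy ihz => rw [mul_inv_rev]; exact Submonoid.mul_mem _ ihz ihy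
    induction hg using Subgroup.closure_induction with
    | mem y hy => exact Submonoid.subset_closure hy
    | one => exact Submonoid.one_mem _
    | mul y z _ _ ihy ihz => exact Submonoid.mul_mem _ ihy ihz
    | inv y hy ihy => exact hInvClosed y ihy
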